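/- For given base functions b, b' ∈ L^p(I) (1 ≤ p ≤ ∞) and every seed function f ∈ L^p(I), it holds that ‖(f *_T b) − (f *_T b')‖_p ≤ (Λ/(1−Λ)) ‖b − b'‖_p. -/

import Mathlib

open MeasureTheory ENNReal

noncomputable section

/-- The inverse of the increasing affine map `L n` sending `[x 0, x N]` onto
`[x n, x (n+1)]` (so `L n (x 0) = x n.castSucc` and `L n (x N) = x n.succ`). -/
def Linv {N : ℕ} (x : Fin (N + 1) → ℝ) (n : Fin N) (y : ℝ) : ℝ :=
  x 0 + (y - x n.castSucc) * (x (Fin.last N) - x 0) / (x n.succ - x n.castSucc)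

/-- The subinterval `I n` of the partition: `[x 0, x 1]` for `n = 0` and
`(x n, x (n+1)]` otherwise. -/
def subInt {N : ℕ} (x : Fin (N + 1) → ℝ) (n : Fin N) : Set ℝ :=
  if n.val = 0 then Set.Icc (x n.castSucc) (x n.succ)
  else Set.Ioc (x n.castSucc) (x n.succ)

/-- `h` is the image of `g` under the Read–Bajraktarević operator `T_{f,b}` with
scale functions `α`, almost everywhere: on each `I n`,
`h = f + (α n ∘ Lₙ⁻¹) · ((g - b) ∘ Lₙ⁻¹)`. -/
def RBEq {N : ℕ} (μ : Measure ℝ) (x : Fin (N + 1) → ℝ) (α : Fin N → ℝ → ℝ)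
    (f b g h : ℝ → ℝ) : Prop :=
  ∀ n : Fin N, ∀ᵐ t ∂μ, t ∈ subInt x n →
    h t = f t + α n (Linv x n t) * (g (Linv x n t) - b (Linv x n t))

/-- `h` satisfies the self-referential equation of `T_{f,b}`, i.e. `h` is a fixed
point of `T_{f,b}`; `h` is then the fractal convolution `f *_T b`. -/
def SelfRef {N : ℕ} (μ : Measure ℝ) (x : Fin (N + 1) → ℝ) (α : Fin N → ℝ → ℝ)
    (f b h : ℝ → ℝ) : Prop :=
  RBEq μ x α f b h h

lemma affine_measurableEmbedding (c d : ℝ) (hc : c ≠ 0) :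
    MeasurableEmbedding (fun t : ℝ => c * t + d) :=
  ((Homeomorph.mulLeft₀ c hc).trans (Homeomorph.addRight d)).measurableEmbedding

lemma affine_map_volume (c d : ℝ) (hc : c ≠ 0) :
    Measure.map (fun t : ℝ => c * t + d) volume
      = ENNReal.ofReal |c⁻¹| • volume := by
  have : (fun t : ℝ => c * t + d) = (fun y => y + d) ∘ (fun t => c * t) := rfl
  rw [this, ← Measure.map_map (measurable_add_const d) (measurable_const_mul c),
    Real.map_volume_mul_left hc, Measure.map_smul,
    map_add_right_eq_self volume d]

lemma affine_cov (c d : ℝ) (hc : 0 < c) (T : Set ℝ) (H : ℝ → ℝ≥0∞) :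
    ∫⁻ t in (fun t : ℝ => c * t + d) ⁻¹' T, H (c * t + d) ∂volume
      = ENNReal.ofReal c⁻¹ * ∫⁻ s in T, H s ∂volume := by
  have hemb := affine_measurableEmbedding c d hc.ne'
  calc ∫⁻ t in (fun t : ℝ => c * t + d) ⁻¹' T, H (c * t + d) ∂volume
      = ∫⁻ s in T, H s ∂(Measure.map (fun t : ℝ => c * t + d) volume) := by
        rw [hemb.restrict_map, hemb.lintegral_map]
    _ = ENNReal.ofReal c⁻¹ * ∫⁻ s in T, H s ∂volume := by
        rw [affine_map_volume c d hc.ne', Measure.restrict_smul, lintegral_smul_measure,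
          abs_of_pos (inv_pos.2 hc), smul_eq_mul]

lemma affine_qmp (c d : ℝ) (hc : c ≠ 0) :
    Measure.QuasiMeasurePreserving (fun t : ℝ => c * t + d) volume volume := by
  refine ⟨(measurable_const_mul c).add_const d, ?_⟩
  rw [affine_map_volume c d hc]
  exact Measure.smul_absolutelyContinuous

lemma transfer {c d : ℝ} (hc : c ≠ 0) {I S : Set ℝ} (hI : MeasurableSet I)
    (hmap : ∀ t ∈ S, c * t + d ∈ I) {P : ℝ → Prop}
    (hP : ∀ᵐ s ∂(volume.restrict I), P s) :
    ∀ᵐ t ∂(volume.restrict I), t ∈ S → P (c * t + d) := by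
  have hA : volume ({s | ¬ P s} ∩ I) = 0 := by
    have := ae_iff.1 hP
    rwa [Measure.restrict_apply' hI] at this
  have hT : volume ((fun t : ℝ => c * t + d) ⁻¹' ({s | ¬ P s} ∩ I)) = 0 :=
    (affine_qmp c d hc).preimage_null hA
  refine ae_mono Measure.restrict_le_self ?_
  show ∀ᵐ t ∂volume, t ∈ S → P (c * t + d)
  rw [ae_iff]
  refine measure_mono_null (fun t ht => ?_) hT
  simp only [Set.mem_setOf_eq, not_forall] at ht
  exact ⟨ht.2, hmap t ht.1⟩


lemma Ioc_subset_subInt {N : ℕ} (x : Fin (N + 1) → ℝ) (n : Fin N) :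
    Set.Ioc (x n.castSucc) (x n.succ) ⊆ subInt x n := by
  unfold subInt; split
  · exact Set.Ioc_subset_Icc_self
  · exact subset_rfl

lemma subInt_subset_Icc {N : ℕ} (x : Fin (N + 1) → ℝ) (n : Fin N) :
    subInt x n ⊆ Set.Icc (x n.castSucc) (x n.succ) := by
  unfold subInt; split
  · exact subset_rfl
  · exact Set.Ioc_subset_Icc_self

lemma measurableSet_subInt {N : ℕ} (x : Fin (N + 1) → ℝ) (n : Fin N) :
    MeasurableSet (subInt x n) := by
  unfold subInt; split
  · exact measurableSet_Icc
  · exact measurableSet_Ioc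

lemma cover {N : ℕ} (hN : 1 ≤ N) (x : Fin (N + 1) → ℝ) (hx : StrictMono x) :
    Set.Icc (x 0) (x (Fin.last N)) ⊆ ⋃ n, subInt x n := by
  intro t ⟨ht0, htX⟩
  by_cases ht1 : t ≤ x ⟨1, by omega⟩
  · refine Set.mem_iUnion.2 ⟨⟨0, by omega⟩, ?_⟩
    have h0 : (⟨0, by omega⟩ : Fin N).castSucc = (0 : Fin (N + 1)) := rfl
    have h1 : (⟨0, by omega⟩ : Fin N).succ = (⟨1, by omega⟩ : Fin (N + 1)) := rfl
    simp only [subInt, if_pos rfl, h0, h1]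
    exact ⟨ht0, ht1⟩
  · push_neg at ht1
    set F : Finset (Fin (N + 1)) := Finset.univ.filter (fun i => x i < t) with hF
    have hFne : F.Nonempty := ⟨⟨1, by omega⟩, by simp [hF, ht1]⟩
    set m := F.max' hFne with hm
    have hmF : m ∈ F := F.max'_mem hFne
    have hxm : x m < t := by simpa [hF] using hmF
    have hmN : m.val < N := by
      rcases lt_or_eq_of_le (Nat.lt_succ_iff.1 m.isLt) with h | h
      · exact h
      · exfalso
        have : m = Fin.last N := Fin.ext h
        rw [this] at hxm; exact absurd htX (not_le.2 hxm)
    set n : Fin N := ⟨m.val, hmN⟩ with hn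
    have hcast : n.castSucc = m := Fin.ext rfl
    refine Set.mem_iUnion.2 ⟨n, Ioc_subset_subInt x n ?_⟩
    constructor
    · rw [hcast]; exact hxm
    · by_contra h
      push_neg at h
      have hmem : n.succ ∈ F := by simp [hF, h]
      have := F.le_max' _ hmem
      rw [← hm] at this
      have hlt : m < n.succ := by rw [← hcast]; exact n.castSucc_lt_succ
      exact absurd this (not_le.2 hlt)

lemma telescope {N : ℕ} (x : Fin (N + 1) → ℝ) :
    ∑ n : Fin N, (x n.succ - x n.castSucc) = x (Fin.last N) - x 0 := by
  induction N with
  | zero => simp [Fin.last]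
  | succ k ih =>
    rw [Fin.sum_univ_castSucc]
    have h1 : ∀ n : Fin k, ((n.castSucc : Fin (k+1)).succ : Fin (k+2)) =
        ((n.succ : Fin (k+1)).castSucc : Fin (k+2)) := by
      intro n; exact Fin.ext (by simp)
    have h := ih (fun i : Fin (k + 1) => x i.castSucc)
    simp only [h1]
    rw [show ∑ n : Fin k, (x ((n.succ).castSucc) - x ((n.castSucc).castSucc))
        = x ((Fin.last k).castSucc) - x ((0 : Fin (k+1)).castSucc) from h,
      Fin.succ_last, show ((0 : Fin (k+1)).castSucc : Fin (k+2)) = 0 from rfl]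
    ring

lemma key_est {N : ℕ} (hN : 1 ≤ N) (x : Fin (N + 1) → ℝ) (hx : StrictMono x)
    (μ₀ : Measure ℝ) (hμ₀ : μ₀ = volume.restrict (Set.Icc (x 0) (x (Fin.last N))))
    (p : ℝ≥0∞) (hp : 1 ≤ p)
    (A : Fin N → ℝ → ℝ) (Λ : ℝ)
    (hA : ∀ n, ∀ᵐ s ∂μ₀, (‖A n s‖₊ : ℝ≥0∞) ≤ ENNReal.ofReal Λ)
    (D W : ℝ → ℝ)
    (hkey : ∀ n, ∀ᵐ t ∂μ₀,
      t ∈ subInt x n → D t = A n (Linv x n t) * W (Linv x n t)) :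
    eLpNorm D p μ₀ ≤ ENNReal.ofReal Λ * eLpNorm W p μ₀ := by
  subst hμ₀
  set I : Set ℝ := Set.Icc (x 0) (x (Fin.last N)) with hIdef
  set μ : Measure ℝ := volume.restrict I with hμdef
  have hI : MeasurableSet I := measurableSet_Icc
  have hab : ∀ n : Fin N, x n.castSucc < x n.succ := fun n => hx (n.castSucc_lt_succ)
  have h0X : x 0 < x (Fin.last N) := by
    apply hx
    rw [Fin.lt_def]
    simp [Fin.last]
    omega
  set c : Fin N → ℝ := fun n => (x (Fin.last N) - x 0) / (x n.succ - x n.castSucc) with hcdef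
  set d : Fin N → ℝ := fun n => x 0 - x n.castSucc * c n with hddef
  have hc : ∀ n, 0 < c n := fun n => div_pos (by linarith [h0X]) (by linarith [hab n])
  have hLinv : ∀ n t, Linv x n t = c n * t + d n := by
    intro n t
    have hne : x n.succ - x n.castSucc ≠ 0 := by linarith [hab n]
    simp only [Linv, hcdef, hddef]
    field_simp
    ring
  have hbval : ∀ n : Fin N, c n * x n.succ + d n = x (Fin.last N) := by
    intro n
    have hne : x n.succ - x n.castSucc ≠ 0 := by linarith [hab n]
    simp only [hcdef, hddef]
    field_simp
    ring
  have haval : ∀ n : Fin N, c n * x n.castSucc + d n = x 0 := by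
    intro n; simp only [hddef]; ring
  have hφI : ∀ n : Fin N, ∀ t ∈ subInt x n, c n * t + d n ∈ I := by
    intro n t ht
    obtain ⟨h1, h2⟩ := subInt_subset_Icc x n ht
    constructor
    · rw [← haval n]; nlinarith [hc n]
    · rw [← hbval n]; nlinarith [hc n]
  have hpre : ∀ n : Fin N, (fun t : ℝ => c n * t + d n) ⁻¹' I
      = Set.Icc (x n.castSucc) (x n.succ) := by
    intro n
    ext t
    simp only [Set.mem_preimage, hIdef, Set.mem_Icc, ← haval n, ← hbval n]
    constructor
    · rintro ⟨h1, h2⟩; constructor <;> nlinarith [hc n]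
    · rintro ⟨h1, h2⟩; constructor <;> nlinarith [hc n]
  have hp0 : p ≠ 0 := fun h => by simp [h] at hp
  by_cases hptop : p = ∞
  · -- p = ∞
    subst hptop
    rw [eLpNorm_exponent_top, eLpNorm_exponent_top]
    set C := eLpNormEssSup W μ with hCdef
    have hW' : ∀ n : Fin N, ∀ᵐ t ∂μ, t ∈ subInt x n →
        (‖W (c n * t + d n)‖₊ : ℝ≥0∞) ≤ C :=
      fun n => transfer (P := fun s => (‖W s‖₊ : ℝ≥0∞) ≤ C) (hc n).ne' hI (hφI n)
        (enorm_ae_le_eLpNormEssSup W μ)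
    have hA' : ∀ n : Fin N, ∀ᵐ t ∂μ, t ∈ subInt x n →
        (‖A n (c n * t + d n)‖₊ : ℝ≥0∞) ≤ ENNReal.ofReal Λ :=
      fun n => transfer (P := fun s => (‖A n s‖₊ : ℝ≥0∞) ≤ ENNReal.ofReal Λ) (hc n).ne' hI
        (hφI n) (hA n)
    have hbound : ∀ᵐ t ∂μ, (‖D t‖₊ : ℝ≥0∞) ≤ ENNReal.ofReal Λ * C := by
      have hmem : ∀ᵐ t ∂μ, t ∈ I := ae_restrict_mem hI
      filter_upwards [hmem, ae_all_iff.2 hW', ae_all_iff.2 hA', ae_all_iff.2 hkey]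
        with t htI hW2 hA2 hk2
      obtain ⟨n, hn⟩ := Set.mem_iUnion.1 (cover hN x hx htI)
      rw [hk2 n hn, hLinv n t]
      calc (‖A n (c n * t + d n) * W (c n * t + d n)‖₊ : ℝ≥0∞)
          = (‖A n (c n * t + d n)‖₊ : ℝ≥0∞) * ‖W (c n * t + d n)‖₊ := by
            rw [nnnorm_mul, ENNReal.coe_mul]
        _ ≤ ENNReal.ofReal Λ * C := mul_le_mul' (hA2 n hn) (hW2 n hn)
    rw [show eLpNormEssSup D μ = essSup (fun t => (‖D t‖₊ : ℝ≥0∞)) μ from rfl]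
    exact essSup_le_of_ae_le _ hbound
  · -- p finite
    set q : ℝ := p.toReal with hqdef
    have hq0 : 0 < q := ENNReal.toReal_pos hp0 hptop
    rw [eLpNorm_eq_lintegral_rpow_enorm_toReal hp0 hptop, eLpNorm_eq_lintegral_rpow_enorm_toReal hp0 hptop]
    set H : Fin N → ℝ → ℝ≥0∞ := fun n s => (‖A n s‖₊ : ℝ≥0∞) ^ q * (‖W s‖₊ : ℝ≥0∞) ^ q
      with hHdef
    have hmain : ∫⁻ s, (‖D s‖₊ : ℝ≥0∞) ^ q ∂μ
        ≤ ENNReal.ofReal Λ ^ q * ∫⁻ s, (‖W s‖₊ : ℝ≥0∞) ^ q ∂μ := by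
      have pern : ∀ n : Fin N, ∫⁻ t in subInt x n, (‖D t‖₊ : ℝ≥0∞) ^ q ∂volume
          ≤ ENNReal.ofReal (c n)⁻¹ *
            (ENNReal.ofReal Λ ^ q * ∫⁻ s, (‖W s‖₊ : ℝ≥0∞) ^ q ∂μ) := by
        intro n
        have hsub : subInt x n ⊆ I := fun t ht => by
          obtain ⟨h1, h2⟩ := subInt_subset_Icc x n ht
          exact ⟨le_trans (hx.monotone (Fin.zero_le _)) h1,
            le_trans h2 (hx.monotone (Fin.le_last _))⟩
        have hkey' : ∀ᵐ t ∂(volume.restrict (subInt x n)),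
            D t = A n (Linv x n t) * W (Linv x n t) := by
          have h1 : ∀ᵐ t ∂(volume.restrict (subInt x n)), t ∈ subInt x n →
              D t = A n (Linv x n t) * W (Linv x n t) :=
            ae_mono (Measure.restrict_mono hsub le_rfl) (hkey n)
          filter_upwards [h1, ae_restrict_mem (measurableSet_subInt x n)] with t h ht
          exact h ht
        calc ∫⁻ t in subInt x n, (‖D t‖₊ : ℝ≥0∞) ^ q ∂volume
            = ∫⁻ t in subInt x n, H n (c n * t + d n) ∂volume := by
              refine lintegral_congr_ae ?_
              filter_upwards [hkey'] with t h
              rw [h, hLinv n t, hHdef]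
              simp only [nnnorm_mul, ENNReal.coe_mul]
              rw [ENNReal.mul_rpow_of_nonneg _ _ hq0.le]
          _ ≤ ∫⁻ t in Set.Icc (x n.castSucc) (x n.succ), H n (c n * t + d n) ∂volume :=
              lintegral_mono_set (subInt_subset_Icc x n)
          _ = ∫⁻ t in (fun t : ℝ => c n * t + d n) ⁻¹' I, H n (c n * t + d n) ∂volume := by
              rw [hpre n]
          _ = ENNReal.ofReal (c n)⁻¹ * ∫⁻ s in I, H n s ∂volume :=
              affine_cov (c n) (d n) (hc n) I (H n)
          _ ≤ ENNReal.ofReal (c n)⁻¹ *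
              (ENNReal.ofReal Λ ^ q * ∫⁻ s, (‖W s‖₊ : ℝ≥0∞) ^ q ∂μ) := by
              gcongr
              rw [← lintegral_const_mul' _ _ (ENNReal.rpow_ne_top_of_nonneg hq0.le ENNReal.ofReal_ne_top)]
              refine lintegral_mono_ae ?_
              filter_upwards [hA n] with s hs
              rw [hHdef]
              exact mul_le_mul' (ENNReal.rpow_le_rpow hs hq0.le) le_rfl
      calc ∫⁻ s, (‖D s‖₊ : ℝ≥0∞) ^ q ∂μ
          ≤ ∫⁻ s in ⋃ n, subInt x n, (‖D s‖₊ : ℝ≥0∞) ^ q ∂volume := by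
            rw [hμdef]
            exact lintegral_mono_set (cover hN x hx)
        _ ≤ ∑' n : Fin N, ∫⁻ s in subInt x n, (‖D s‖₊ : ℝ≥0∞) ^ q ∂volume :=
            lintegral_iUnion_le _ _
        _ = ∑ n : Fin N, ∫⁻ s in subInt x n, (‖D s‖₊ : ℝ≥0∞) ^ q ∂volume := tsum_fintype _
        _ ≤ ∑ n : Fin N, ENNReal.ofReal (c n)⁻¹ *
              (ENNReal.ofReal Λ ^ q * ∫⁻ s, (‖W s‖₊ : ℝ≥0∞) ^ q ∂μ) :=
            Finset.sum_le_sum fun n _ => pern n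
        _ = (∑ n : Fin N, ENNReal.ofReal (c n)⁻¹) *
              (ENNReal.ofReal Λ ^ q * ∫⁻ s, (‖W s‖₊ : ℝ≥0∞) ^ q ∂μ) :=
            (Finset.sum_mul _ _ _).symm
        _ = ENNReal.ofReal Λ ^ q * ∫⁻ s, (‖W s‖₊ : ℝ≥0∞) ^ q ∂μ := by
            have hsum : (∑ n : Fin N, ENNReal.ofReal (c n)⁻¹) = 1 := by
              rw [← ENNReal.ofReal_sum_of_nonneg (fun n _ => (inv_pos.2 (hc n)).le)]
              have : ∀ n : Fin N, (c n)⁻¹ = (x n.succ - x n.castSucc) / (x (Fin.last N) - x 0) := by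
                intro n; rw [hcdef]; simp [inv_div]
              rw [Finset.sum_congr rfl (fun n _ => this n), ← Finset.sum_div, telescope,
                div_self (by linarith [h0X]), ENNReal.ofReal_one]
            rw [hsum, one_mul]
    calc (∫⁻ s, (‖D s‖₊ : ℝ≥0∞) ^ q ∂μ) ^ (1 / q)
        ≤ (ENNReal.ofReal Λ ^ q * ∫⁻ s, (‖W s‖₊ : ℝ≥0∞) ^ q ∂μ) ^ (1 / q) :=
          ENNReal.rpow_le_rpow hmain (one_div_nonneg.2 hq0.le)
      _ = ENNReal.ofReal Λ * (∫⁻ s, (‖W s‖₊ : ℝ≥0∞) ^ q ∂μ) ^ (1 / q) := by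
          rw [ENNReal.mul_rpow_of_nonneg _ _ (one_div_nonneg.2 hq0.le), ← ENNReal.rpow_mul,
            mul_one_div_cancel hq0.ne', ENNReal.rpow_one]

lemma linv_facts {N : ℕ} (hN : 1 ≤ N) (x : Fin (N + 1) → ℝ) (hx : StrictMono x) (n : Fin N) :
    ∃ c d : ℝ, 0 < c ∧ (∀ t, Linv x n t = c * t + d) ∧
      (∀ t ∈ subInt x n, c * t + d ∈ Set.Icc (x 0) (x (Fin.last N))) := by
  have hab : x n.castSucc < x n.succ := hx (n.castSucc_lt_succ)
  have h0X : x 0 < x (Fin.last N) := by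
    apply hx
    rw [Fin.lt_def]
    simp [Fin.last]
    omega
  have hne : x n.succ - x n.castSucc ≠ 0 := by linarith
  refine ⟨(x (Fin.last N) - x 0) / (x n.succ - x n.castSucc),
    x 0 - x n.castSucc * ((x (Fin.last N) - x 0) / (x n.succ - x n.castSucc)), ?_, ?_, ?_⟩
  · exact div_pos (by linarith) (by linarith)
  · intro t; simp only [Linv]; field_simp; ring
  · intro t ht
    obtain ⟨h1, h2⟩ := subInt_subset_Icc x n ht
    set c := (x (Fin.last N) - x 0) / (x n.succ - x n.castSucc) with hc
    have hcpos : 0 < c := div_pos (by linarith) (by linarith)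
    have hb : c * x n.succ + (x 0 - x n.castSucc * c) = x (Fin.last N) := by
      rw [hc]; field_simp; ring
    have ha : c * x n.castSucc + (x 0 - x n.castSucc * c) = x 0 := by ring
    constructor
    · rw [← ha]; nlinarith
    · rw [← hb]; nlinarith

lemma transfer_Linv {N : ℕ} (hN : 1 ≤ N) (x : Fin (N + 1) → ℝ) (hx : StrictMono x) (n : Fin N)
    (μ : Measure ℝ) (hμ : μ = volume.restrict (Set.Icc (x 0) (x (Fin.last N))))
    {P : ℝ → Prop}
    (hP : ∀ᵐ s ∂μ, P s) :
    ∀ᵐ t ∂μ, t ∈ subInt x n → P (Linv x n t) := by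
  subst hμ
  obtain ⟨c, d, hc, hL, hmap⟩ := linv_facts hN x hx n
  have := transfer (P := P) hc.ne' measurableSet_Icc hmap hP
  filter_upwards [this] with t h ht
  rw [hL t]
  exact h ht


/-- For base functions `b, b'` and any seed function `f`,
`‖(f *_T b) − (f *_T b')‖_p ≤ (Λ/(1−Λ)) ‖b − b'‖_p`. -/
theorem fractal_convolution_base_stability
    (N : ℕ) (hN : 2 ≤ N) (x : Fin (N + 1) → ℝ) (hx : StrictMono x)
    (μ : Measure ℝ) (hμ : μ = volume.restrict (Set.Icc (x 0) (x (Fin.last N))))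
    (p : ℝ≥0∞) [Fact (1 ≤ p)]
    (α : Fin N → Lp ℝ ∞ μ)
    (Λ : ℝ) (hΛdef : Λ = ⨆ n : Fin N, ‖α n‖) (hΛ : Λ < 1)
    (f b b' : Lp ℝ p μ) (fb fb' : Lp ℝ p μ)
    (hfb : SelfRef μ x (fun n => ⇑(α n)) ⇑f ⇑b ⇑fb)
    (hfb' : SelfRef μ x (fun n => ⇑(α n)) ⇑f ⇑b' ⇑fb') :
    ‖fb - fb'‖ ≤ Λ / (1 - Λ) * ‖b - b'‖ := by
  have hN1 : 1 ≤ N := by omega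
  haveI : Nonempty (Fin N) := ⟨⟨0, by omega⟩⟩
  have hbdd : BddAbove (Set.range fun n => ‖α n‖) := (Set.finite_range _).bddAbove
  have hαle : ∀ n, ‖α n‖ ≤ Λ := fun n => hΛdef ▸ le_ciSup hbdd n
  have hΛ0 : 0 ≤ Λ := le_trans (norm_nonneg (α (Classical.arbitrary _))) (hαle _)
  have hA : ∀ n, ∀ᵐ s ∂μ, (‖(α n : ℝ → ℝ) s‖₊ : ℝ≥0∞) ≤ ENNReal.ofReal Λ := by
    intro n
    filter_upwards [enorm_ae_le_eLpNormEssSup (⇑(α n)) μ] with s hs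
    refine hs.trans ?_
    calc eLpNormEssSup (⇑(α n)) μ = ENNReal.ofReal ‖α n‖ := by
          rw [Lp.norm_def, ENNReal.ofReal_toReal (Lp.eLpNorm_ne_top _), eLpNorm_exponent_top]
      _ ≤ ENNReal.ofReal Λ := ENNReal.ofReal_le_ofReal (hαle n)
  set W : Lp ℝ p μ := fb - fb' - (b - b') with hWdef
  have hWcoe : ∀ᵐ s ∂μ, (W : ℝ → ℝ) s = (fb s - fb' s) - (b s - b' s) := by
    filter_upwards [Lp.coeFn_sub (fb - fb') (b - b'), Lp.coeFn_sub fb fb',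
      Lp.coeFn_sub b b'] with s e1 e2 e3
    rw [hWdef]
    simp only [e1, Pi.sub_apply, e2, e3]
  have hDcoe : ∀ᵐ s ∂μ, ((fb - fb' : Lp ℝ p μ) : ℝ → ℝ) s = fb s - fb' s := by
    filter_upwards [Lp.coeFn_sub fb fb'] with s e
    simp only [e, Pi.sub_apply]
  have hkey : ∀ n : Fin N, ∀ᵐ t ∂μ, t ∈ subInt x n →
      ((fb - fb' : Lp ℝ p μ) : ℝ → ℝ) t
        = (α n : ℝ → ℝ) (Linv x n t) * (W : ℝ → ℝ) (Linv x n t) := by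
    intro n
    filter_upwards [hfb n, hfb' n, transfer_Linv hN1 x hx n μ hμ hWcoe, hDcoe]
      with t h1 h2 h3 h4 ht
    rw [h4, h3 ht, h1 ht, h2 ht]
    ring
  have key := key_est hN1 x hx μ hμ p Fact.out (fun n => ⇑(α n)) Λ hA _ _ hkey
  have hfin : ENNReal.ofReal Λ * eLpNorm (W : ℝ → ℝ) p μ ≠ ∞ :=
    ENNReal.mul_ne_top ENNReal.ofReal_ne_top (Lp.eLpNorm_ne_top W)
  have hAle : ‖fb - fb'‖ ≤ Λ * ‖W‖ := by
    rw [Lp.norm_def, Lp.norm_def]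
    have h := ENNReal.toReal_mono hfin key
    rwa [ENNReal.toReal_mul, ENNReal.toReal_ofReal hΛ0] at h
  have hWle : ‖W‖ ≤ ‖fb - fb'‖ + ‖b - b'‖ := norm_sub_le _ _
  have h1Λ : 0 < 1 - Λ := by linarith
  rw [div_mul_eq_mul_div, le_div_iff₀ h1Λ]
  nlinarith [norm_nonneg (b - b'), norm_nonneg (fb - fb'),
    mul_le_mul_of_nonneg_left hWle hΛ0]
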